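/- Let (X_n) be random variables with √n(X_n − θ0) converging in distribution to N(0, σ²) with σ > 0, and fix δ > θ0, γ ∈ (0,1), and c > 0. Define the power π_n = Pr(Φ(√n(δ − X_n)c) ≥ γ). Then π_n → 1 as n → ∞. -/

import Mathlib

open MeasureTheory ProbabilityTheory Filter

/-- The standard normal cumulative distribution function. -/
noncomputable def stdNormCDF (x : ℝ) : ℝ := ((gaussianReal 0 1) (Set.Iic x)).toReal

lemma stdNormCDF_mono : Monotone stdNormCDF := fun a b h =>
  ENNReal.toReal_mono (measure_ne_top _ _) (measure_mono (Set.Iic_subset_Iic.2 h))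

lemma stdNormCDF_tendsto : Tendsto stdNormCDF atTop (nhds 1) := by
  have h := tendsto_measure_Iic_atTop (μ := gaussianReal 0 1)
  have h2 : Tendsto (fun x => ((gaussianReal 0 1) (Set.Iic x)).toReal) atTop
      (nhds ((gaussianReal (0:ℝ) 1) Set.univ).toReal) :=
    (ENNReal.tendsto_toReal (by simp)).comp h
  simp at h2
  exact h2

/-- If √n(X_n - θ0) converges in distribution to N(0, σ²) (expressed via convergence of the
CDFs), δ > θ0, γ ∈ (0,1), and c > 0, then the power
π_n = Pr(Φ(√n(δ - X_n)c) ≥ γ) tends to 1. -/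
theorem power_consistency_one_sided
    {Ω : Type*} [MeasurableSpace Ω] (μ : Measure Ω) [IsProbabilityMeasure μ]
    (X : ℕ → Ω → ℝ) (θ0 δ σ γ c : ℝ) (hσ : 0 < σ) (hδ : θ0 < δ)
    (hγ0 : 0 < γ) (hγ1 : γ < 1) (hc : 0 < c)
    (hX : ∀ x : ℝ,
      Tendsto (fun n : ℕ => (μ {ω | Real.sqrt n * (X n ω - θ0) ≤ x}).toReal) atTop
        (nhds (stdNormCDF (x / σ)))) :
    Tendsto (fun n : ℕ =>
        (μ {ω | γ ≤ stdNormCDF (Real.sqrt n * (δ - X n ω) * c)}).toReal) atTop (nhds 1) := by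
  rw [tendsto_order]
  constructor
  · intro a ha
    -- pick q with γ < stdNormCDF q
    obtain ⟨q, hq⟩ := (stdNormCDF_tendsto.eventually (eventually_gt_nhds hγ1)).exists
    -- pick x0 with a < stdNormCDF x0
    obtain ⟨x0, hx0⟩ := (stdNormCDF_tendsto.eventually (eventually_gt_nhds ha)).exists
    set x : ℝ := x0 * σ with hxdef
    have hxσ : x / σ = x0 := by field_simp; rw [hxdef]; ring
    have hev1 : ∀ᶠ n : ℕ in atTop,
        a < (μ {ω | Real.sqrt n * (X n ω - θ0) ≤ x}).toReal := by
      refine (hX x).eventually (eventually_gt_nhds ?_)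
      rwa [hxσ]
    have hev2 : ∀ᶠ n : ℕ in atTop, x + q / c ≤ Real.sqrt n * (δ - θ0) := by
      set M : ℝ := (x + q / c) / (δ - θ0) with hM
      rw [eventually_atTop]
      refine ⟨⌈M ^ 2⌉₊, fun n hn => ?_⟩
      have h1 : M ≤ Real.sqrt n := by
        calc M ≤ |M| := le_abs_self M
        _ = Real.sqrt (M ^ 2) := (Real.sqrt_sq_eq_abs M).symm
        _ ≤ Real.sqrt n := Real.sqrt_le_sqrt (le_trans (Nat.le_ceil _) (by exact_mod_cast hn))
      have hδ0 : 0 < δ - θ0 := sub_pos.2 hδ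
      calc x + q / c = M * (δ - θ0) := (div_mul_cancel₀ _ hδ0.ne').symm
      _ ≤ Real.sqrt n * (δ - θ0) := by nlinarith
    filter_upwards [hev1, hev2] with n h1 h2
    refine lt_of_lt_of_le h1 (ENNReal.toReal_mono (measure_ne_top _ _) (measure_mono ?_))
    intro ω hω
    simp only [Set.mem_setOf_eq] at hω ⊢
    have key : q ≤ Real.sqrt n * (δ - X n ω) * c := by
      have e : Real.sqrt n * (δ - X n ω) = Real.sqrt n * (δ - θ0) - Real.sqrt n * (X n ω - θ0) := by
        ring
      rw [e]
      have h3 : q / c ≤ Real.sqrt n * (δ - θ0) - x := by linarith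
      have := mul_le_mul_of_nonneg_right (le_trans h3 (by linarith : Real.sqrt n * (δ - θ0) - x ≤ Real.sqrt n * (δ - θ0) - Real.sqrt n * (X n ω - θ0))) hc.le
      rwa [div_mul_cancel₀ _ hc.ne'] at this
    exact le_trans hq.le (stdNormCDF_mono key)
  · intro a ha
    refine Eventually.of_forall fun n => lt_of_le_of_lt ?_ ha
    calc (μ _).toReal ≤ (μ Set.univ).toReal :=
        ENNReal.toReal_mono (measure_ne_top _ _) (measure_mono (Set.subset_univ _))
    _ = 1 := by simp
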